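/- arXiv:1609.02479 — 3 statements merged into one kernel-verified Lean document; each statement's English description precedes it below -/
import Mathlib

section
/- The number of isomorphism classes of interval graphs on n vertices is at most (2n-1)!!. -/
open Nat

/-- A graph on `Fin n` is an interval graph if vertices can be assigned closed real
intervals so that distinct vertices are adjacent iff their intervals intersect. -/
def IsIntervalGraph {n : ℕ} (G : SimpleGraph (Fin n)) : Prop :=
  ∃ a b : Fin n → ℝ, (∀ v, a v ≤ b v) ∧
    ∀ u v : Fin n, u ≠ v →
      (G.Adj u v ↔ (Set.Icc (a u) (b u) ∩ Set.Icc (a v) (b v)).Nonempty)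

/-- The number of isomorphism classes of interval graphs on `n` vertices. -/
noncomputable def intervalGraphCount (n : ℕ) : ℕ :=
  Nat.card (Quot (fun G H : {G : SimpleGraph (Fin n) // IsIntervalGraph G} =>
    Nonempty (G.1 ≃g H.1)))

namespace IntervalGraphAux

/-- The graph decoded from a tuple of thresholds: `u < v` adjacent iff `t v ≤ u`. -/
def decodeGraph {n : ℕ} (t : ∀ v : Fin n, Fin (v.val + 1)) : SimpleGraph (Fin n) where
  Adj u v := u ≠ v ∧ ((t (max u v)) : ℕ) ≤ ((min u v : Fin n) : ℕ)
  symm := ⟨fun u v ⟨h1, h2⟩ => ⟨h1.symm, by rwa [max_comm, min_comm]⟩⟩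
  loopless := ⟨fun v h => h.1 rfl⟩

lemma inter_iff {n : ℕ} (a b : Fin n → ℝ) (hab : ∀ v, a v ≤ b v) (u v : Fin n) :
    (Set.Icc (a u) (b u) ∩ Set.Icc (a v) (b v)).Nonempty ↔ a u ≤ b v ∧ a v ≤ b u := by
  rw [Set.Icc_inter_Icc, Set.nonempty_Icc, max_le_iff, le_min_iff, le_min_iff]
  have h1 := hab u
  have h2 := hab v
  tauto

lemma half_le (p q : ℕ) : ((p : ℝ) - 2⁻¹ ≤ q) ↔ p ≤ q := by
  constructor
  · intro h
    have h1 : (p : ℝ) < (q : ℕ) + 1 := by linarith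
    have h2 : p < q + 1 := by exact_mod_cast h1
    omega
  · intro h
    have : (p : ℝ) ≤ q := Nat.cast_le.mpr h
    linarith

lemma decode_isInterval {n : ℕ} (t : ∀ v : Fin n, Fin (v.val + 1)) :
    IsIntervalGraph (decodeGraph t) := by
  refine ⟨fun v => ((t v : ℕ) : ℝ) - 2⁻¹, fun v => ((v : ℕ) : ℝ), fun v => ?_, fun u v huv => ?_⟩
  · have h : ((t v : ℕ) : ℝ) ≤ ((v : ℕ) : ℝ) := Nat.cast_le.mpr (t v).is_le
    linarith
  · dsimp only
    rw [inter_iff (fun v => ((t v : ℕ) : ℝ) - 2⁻¹) (fun v => ((v : ℕ) : ℝ)) (fun v => by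
      have h : ((t v : ℕ) : ℝ) ≤ ((v : ℕ) : ℝ) := Nat.cast_le.mpr (t v).is_le
      linarith), half_le, half_le]
    show (u ≠ v ∧ ((t (max u v)) : ℕ) ≤ ((min u v : Fin n) : ℕ)) ↔ _
    rcases lt_trichotomy u v with h | h | h
    · rw [max_eq_right h.le, min_eq_left h.le]
      have htu : (t u : ℕ) ≤ (v : ℕ) := le_trans (t u).is_le (le_of_lt h)
      constructor
      · intro ⟨_, h2⟩; exact ⟨htu, h2⟩
      · intro ⟨_, h2⟩; exact ⟨huv, h2⟩
    · exact absurd h huv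
    · rw [max_eq_left h.le, min_eq_right h.le]
      have htv : (t v : ℕ) ≤ (u : ℕ) := le_trans (t v).is_le (le_of_lt h)
      constructor
      · intro ⟨_, h2⟩; exact ⟨h2, htv⟩
      · intro ⟨h2, _⟩; exact ⟨huv, h2⟩

lemma exists_decode {n : ℕ} (G : SimpleGraph (Fin n)) (hG : IsIntervalGraph G) :
    ∃ t : ∀ v : Fin n, Fin (v.val + 1), Nonempty (decodeGraph t ≃g G) := by
  obtain ⟨a, b, hab, hadj⟩ := hG
  set σ := Tuple.sort b with hσ
  have hmono : Monotone (b ∘ σ) := Tuple.monotone_sort b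
  set S : Fin n → Finset (Fin n) :=
    fun v => (Finset.Iio v).filter (fun u => b (σ u) < a (σ v)) with hS
  have hcard : ∀ v, (S v).card ≤ v.val := by
    intro v
    calc (S v).card ≤ (Finset.Iio v).card := Finset.card_le_card (Finset.filter_subset _ _)
      _ = v.val := Fin.card_Iio v
  set t : ∀ v : Fin n, Fin (v.val + 1) :=
    fun v => ⟨(S v).card, Nat.lt_succ_of_le (hcard v)⟩ with ht
  have hdc : ∀ v u w : Fin n, u ≤ w → w ∈ S v → u ∈ S v := by
    intro v u w huw hw
    simp only [hS, Finset.mem_filter, Finset.mem_Iio] at hw ⊢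
    exact ⟨lt_of_le_of_lt huw hw.1, lt_of_le_of_lt (hmono huw) hw.2⟩
  have hmem : ∀ v u, u ∈ S v ↔ u.val < (S v).card := by
    intro v u
    constructor
    · intro hu
      have hsub : Finset.Iic u ⊆ S v := fun w hw => hdc v w u (Finset.mem_Iic.mp hw) hu
      have h := Finset.card_le_card hsub
      rw [Fin.card_Iic] at h
      omega
    · intro hu
      by_contra hns
      have hsub : S v ⊆ Finset.Iio u := by
        intro w hw
        rw [Finset.mem_Iio]
        by_contra hge
        exact hns (hdc v u w (le_of_not_gt hge) hw)
      have h := Finset.card_le_card hsub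
      rw [Fin.card_Iio] at h
      omega
  have key : ∀ u v : Fin n, u < v → (G.Adj (σ u) (σ v) ↔ ((t v : ℕ) ≤ u.val)) := by
    intro u v huv
    have hne : σ u ≠ σ v := fun h => huv.ne (σ.injective h)
    rw [hadj _ _ hne, inter_iff a b hab]
    have h1 : a (σ u) ≤ b (σ v) := le_trans (hab _) (hmono huv.le)
    have h2 : (u ∈ S v) ↔ b (σ u) < a (σ v) := by
      simp only [hS, Finset.mem_filter, Finset.mem_Iio]
      exact ⟨fun h => h.2, fun h => ⟨huv, h⟩⟩
    rw [hmem] at h2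
    constructor
    · intro ⟨_, h⟩
      exact not_lt.mp (fun hlt => absurd (h2.mp hlt) (not_lt.mpr h))
    · intro h
      refine ⟨h1, not_lt.mp (fun hlt => ?_)⟩
      exact absurd (h2.mpr hlt) (not_lt.mpr h)
  refine ⟨t, ⟨⟨σ, ?_⟩⟩⟩
  intro u v
  show G.Adj (σ u) (σ v) ↔ (decodeGraph t).Adj u v
  show G.Adj (σ u) (σ v) ↔ (u ≠ v ∧ ((t (max u v)) : ℕ) ≤ ((min u v : Fin n) : ℕ))
  rcases lt_trichotomy u v with h | h | h
  · rw [max_eq_right h.le, min_eq_left h.le, key u v h]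
    exact ⟨fun hh => ⟨h.ne, hh⟩, fun hh => hh.2⟩
  · subst h
    simp only [ne_eq, not_true_eq_false, false_and, iff_false]
    exact fun hh => (G.loopless.irrefl _) hh
  · rw [max_eq_left h.le, min_eq_right h.le, G.adj_comm, key v u h]
    exact ⟨fun hh => ⟨h.ne', hh⟩, fun hh => hh.2⟩

lemma prod_range_eq_factorial : ∀ m : ℕ, ∏ i ∈ Finset.range m, (i + 1) = m ! := by
  intro m
  induction m with
  | zero => simp
  | succ k ih => rw [Finset.prod_range_succ, ih, Nat.factorial_succ, mul_comm]

lemma factorial_le_doubleFactorial : ∀ m : ℕ, m ! ≤ (2 * m - 1)‼ := by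
  intro m
  induction m with
  | zero => simp
  | succ k ih =>
    have e1 : 2 * (k + 1) - 1 = 2 * k + 1 := by omega
    rw [e1, Nat.factorial_succ]
    have e2 : (2 * k + 1)‼ = (2 * k + 1) * (2 * k - 1)‼ := by
      cases k with
      | zero => simp
      | succ j =>
        simp only [show 2 * (j + 1) + 1 = (2 * j + 1) + 2 from by omega,
          show 2 * (j + 1) - 1 = 2 * j + 1 from by omega, Nat.doubleFactorial_add_two]
    rw [e2]
    exact Nat.mul_le_mul (by omega) ih

end IntervalGraphAux

theorem intervalGraphCount_le (n : ℕ) :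
    intervalGraphCount n ≤ (2 * n - 1)‼ := by
  have h1 : intervalGraphCount n ≤ Nat.card (∀ v : Fin n, Fin (v.val + 1)) := by
    rw [intervalGraphCount]
    apply Nat.card_le_card_of_surjective
      (fun t => Quot.mk _ ⟨IntervalGraphAux.decodeGraph t, IntervalGraphAux.decode_isInterval t⟩)
    intro q
    obtain ⟨⟨G, hG⟩, rfl⟩ := Quot.exists_rep q
    obtain ⟨t, ⟨e⟩⟩ := IntervalGraphAux.exists_decode G hG
    exact ⟨t, Quot.sound ⟨e⟩⟩
  have h2 : Nat.card (∀ v : Fin n, Fin (v.val + 1)) = n ! := by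
    rw [Nat.card_pi]
    simp only [Nat.card_eq_fintype_card, Fintype.card_fin]
    rw [Fin.prod_univ_eq_prod_range (fun i => i + 1) n]
    exact IntervalGraphAux.prod_range_eq_factorial n
  calc intervalGraphCount n ≤ n ! := h1.trans (le_of_eq h2)
    _ ≤ _ := IntervalGraphAux.factorial_le_doubleFactorial n
end

section
/- The map sending a permutation π of {1,...,k} to the vertex-3-colored intersection graph G_π of the intervals R_j = [3j-1,3j] (red), B_j = [3k+3j-2,3k+3j-1] (blue), W_j = [3j-2, 3k+3π(j)] (white) is injective: if G_π and G_σ are isomorphic as colored graphs, then π = σ. -/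
/-- The intervals associated to a permutation `π` of `{1,…,k}`: red `R_j = [3j-1,3j]`,
blue `B_j = [3k+3j-2,3k+3j-1]`, white `W_j = [3j-2, 3k+3π(j)]` (indices `0`-based here). -/
noncomputable def permIvl (k : ℕ) (π : Equiv.Perm (Fin k)) :
    (Fin k ⊕ Fin k ⊕ Fin k) → Set ℝ :=
  Sum.elim (fun j => Set.Icc (3*(j:ℝ)+2) (3*(j:ℝ)+3))
    (Sum.elim (fun j => Set.Icc (3*(k:ℝ)+3*(j:ℝ)+1) (3*(k:ℝ)+3*(j:ℝ)+2))
      (fun j => Set.Icc (3*(j:ℝ)+1) (3*(k:ℝ)+3*((π j : ℕ):ℝ)+3)))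

/-- The intersection graph `G_π` of the intervals of `permIvl`. -/
noncomputable def permGraph (k : ℕ) (π : Equiv.Perm (Fin k)) :
    SimpleGraph (Fin k ⊕ Fin k ⊕ Fin k) where
  Adj u v := u ≠ v ∧ (permIvl k π u ∩ permIvl k π v).Nonempty
  symm := by
    constructor
    intro u v h
    obtain ⟨h1, h2⟩ := h
    exact ⟨h1.symm, by rwa [Set.inter_comm]⟩
  loopless := by constructor; intro v h; exact h.1 rfl

/-- The 3-coloring: red, blue, white. -/
def permColor (k : ℕ) : (Fin k ⊕ Fin k ⊕ Fin k) → Fin 3 :=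
  Sum.elim (fun _ => 0) (Sum.elim (fun _ => 1) (fun _ => 2))

/-- White `j` is adjacent to red `i` iff `j ≤ i`. -/
lemma permGraph_adj_white_red (k : ℕ) (π : Equiv.Perm (Fin k)) (j i : Fin k) :
    (permGraph k π).Adj (Sum.inr (Sum.inr j)) (Sum.inl i) ↔ j ≤ i := by
  have hik : ((i:ℕ):ℝ) + 1 ≤ (k:ℝ) := by exact_mod_cast i.isLt
  have hπ : (0:ℝ) ≤ ((π j : ℕ):ℝ) := by positivity
  constructor
  · rintro ⟨-, x, hx1, hx2⟩
    simp only [permIvl, Sum.elim_inl, Sum.elim_inr, Set.mem_Icc] at hx1 hx2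
    have h1 : 3*((j:ℕ):ℝ) + 1 ≤ 3*((i:ℕ):ℝ) + 3 := le_trans hx1.1 hx2.2
    rw [Fin.le_def]
    by_contra hc
    push_neg at hc
    have : ((i:ℕ):ℝ) + 1 ≤ ((j:ℕ):ℝ) := by exact_mod_cast hc
    linarith
  · intro hji
    rw [Fin.le_def] at hji
    have hji' : ((j:ℕ):ℝ) ≤ ((i:ℕ):ℝ) := by exact_mod_cast hji
    refine ⟨by simp, ⟨3*((i:ℕ):ℝ) + 2, ?_, ?_⟩⟩
    · simp only [permIvl, Sum.elim_inl, Sum.elim_inr, Set.mem_Icc]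
      constructor <;> linarith
    · simp only [permIvl, Sum.elim_inl, Set.mem_Icc]
      constructor <;> linarith

/-- White `j` is adjacent to blue `i` iff `i ≤ π j`. -/
lemma permGraph_adj_white_blue (k : ℕ) (π : Equiv.Perm (Fin k)) (j i : Fin k) :
    (permGraph k π).Adj (Sum.inr (Sum.inr j)) (Sum.inr (Sum.inl i)) ↔ i ≤ π j := by
  have hjk : ((j:ℕ):ℝ) + 1 ≤ (k:ℝ) := by exact_mod_cast j.isLt
  have hi : (0:ℝ) ≤ ((i:ℕ):ℝ) := by positivity
  constructor
  · rintro ⟨-, x, hx1, hx2⟩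
    simp only [permIvl, Sum.elim_inl, Sum.elim_inr, Set.mem_Icc] at hx1 hx2
    have h1 : 3*(k:ℝ) + 3*((i:ℕ):ℝ) + 1 ≤ 3*(k:ℝ) + 3*((π j : ℕ):ℝ) + 3 :=
      le_trans hx2.1 hx1.2
    rw [Fin.le_def]
    by_contra hc
    push_neg at hc
    have : ((π j : ℕ):ℝ) + 1 ≤ ((i:ℕ):ℝ) := by exact_mod_cast hc
    linarith
  · intro hij
    rw [Fin.le_def] at hij
    have hij' : ((i:ℕ):ℝ) ≤ ((π j : ℕ):ℝ) := by exact_mod_cast hij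
    refine ⟨by simp, ⟨3*(k:ℝ) + 3*((i:ℕ):ℝ) + 1, ?_, ?_⟩⟩
    · simp only [permIvl, Sum.elim_inl, Sum.elim_inr, Set.mem_Icc]
      constructor <;> linarith
    · simp only [permIvl, Sum.elim_inl, Sum.elim_inr, Set.mem_Icc]
      constructor <;> linarith

open scoped Classical in
/-- Number of neighbors of `w` of color `c`. -/
noncomputable def permCnt (k : ℕ) (G : SimpleGraph (Fin k ⊕ Fin k ⊕ Fin k))
    (w : Fin k ⊕ Fin k ⊕ Fin k) (c : Fin 3) : ℕ :=
  (Finset.univ.filter fun v => G.Adj w v ∧ permColor k v = c).card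

lemma permCnt_iso (k : ℕ) (π σ : Equiv.Perm (Fin k))
    (e : permGraph k π ≃g permGraph k σ) (hC : ∀ v, permColor k (e v) = permColor k v)
    (w : Fin k ⊕ Fin k ⊕ Fin k) (c : Fin 3) :
    permCnt k (permGraph k π) w c = permCnt k (permGraph k σ) (e w) c := by
  classical
  unfold permCnt
  apply Finset.card_bij (fun v _ => e v)
  · intro v hv
    rw [Finset.mem_filter] at hv ⊢
    refine ⟨Finset.mem_univ _, e.map_rel_iff.mpr hv.2.1, ?_⟩
    rw [hC v]; exact hv.2.2
  · intro a _ b _ hab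
    exact e.toEquiv.injective hab
  · intro v' hv'
    rw [Finset.mem_filter] at hv'
    refine ⟨e.symm v', Finset.mem_filter.mpr ⟨Finset.mem_univ _, ?_, ?_⟩, ?_⟩
    · apply e.map_rel_iff.mp
      rw [show e (e.symm v') = v' from e.apply_symm_apply v']
      exact hv'.2.1
    · have h2 := hC (e.symm v')
      rw [show e (e.symm v') = v' from e.apply_symm_apply v'] at h2
      rw [← h2]; exact hv'.2.2
    · exact e.apply_symm_apply v'

lemma permCnt_red (k : ℕ) (π : Equiv.Perm (Fin k)) (j : Fin k) :
    permCnt k (permGraph k π) (Sum.inr (Sum.inr j)) 0 = k - (j:ℕ) := by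
  classical
  unfold permCnt
  have : (Finset.univ.filter fun v => (permGraph k π).Adj (Sum.inr (Sum.inr j)) v ∧
      permColor k v = 0) = (Finset.Ici j).map ⟨Sum.inl, Sum.inl_injective⟩ := by
    ext v
    rcases v with i | (i | i) <;>
      simp only [Finset.mem_filter, Finset.mem_univ, true_and] <;>
      simp [permColor, permGraph_adj_white_red, Finset.mem_map]
  rw [this, Finset.card_map, Fin.card_Ici]

lemma permCnt_blue (k : ℕ) (π : Equiv.Perm (Fin k)) (j : Fin k) :
    permCnt k (permGraph k π) (Sum.inr (Sum.inr j)) 1 = (π j : ℕ) + 1 := by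
  classical
  unfold permCnt
  have : (Finset.univ.filter fun v => (permGraph k π).Adj (Sum.inr (Sum.inr j)) v ∧
      permColor k v = 1) =
      (Finset.Iic (π j)).map ⟨fun i => Sum.inr (Sum.inl i),
        fun a b hab => by simpa using hab⟩ := by
    ext v
    rcases v with i | (i | i) <;>
      simp only [Finset.mem_filter, Finset.mem_univ, true_and] <;>
      simp [permColor, permGraph_adj_white_blue, Finset.mem_map]
    · exact ⟨fun h => ⟨i, h, rfl⟩, fun ⟨a, ha, he⟩ => by
        change Sum.inr (Sum.inl a) = Sum.inr (Sum.inl i) at he; simp at he; exact he ▸ ha⟩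
    · intro x _ he
      change Sum.inr (Sum.inl x) = Sum.inr (Sum.inr i) at he; simp at he
  rw [this, Finset.card_map, Fin.card_Iic]

/-- The map `π ↦ G_π` is injective up to colored isomorphism. -/
theorem permGraph_injective (k : ℕ) (π σ : Equiv.Perm (Fin k))
    (h : ∃ e : permGraph k π ≃g permGraph k σ, ∀ v, permColor k (e v) = permColor k v) :
    π = σ := by
  obtain ⟨e, hC⟩ := h
  ext j
  -- the image of white j is white
  obtain ⟨j', hj'⟩ : ∃ j', e (Sum.inr (Sum.inr j)) = Sum.inr (Sum.inr j') := by
    have hc := hC (Sum.inr (Sum.inr j))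
    rcases hw : e (Sum.inr (Sum.inr j)) with i | (i | i)
    · rw [hw] at hc; simp [permColor] at hc
    · rw [hw] at hc; simp [permColor] at hc
    · exact ⟨i, rfl⟩
  -- red counts force j' = j
  have hred := permCnt_iso k π σ e hC (Sum.inr (Sum.inr j)) 0
  rw [hj', permCnt_red, permCnt_red] at hred
  have hjj' : j = j' := by
    have h1 := j.isLt
    have h2 := j'.isLt
    exact Fin.ext (by omega)
  -- blue counts force π j = σ j
  have hblue := permCnt_iso k π σ e hC (Sum.inr (Sum.inr j)) 1
  rw [hj', permCnt_blue, permCnt_blue, ← hjj'] at hblue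
  omega
end

section
/- For every k ≥ 1, the number of isomorphism classes of interval graphs on 3k vertices satisfies i_{3k} ≥ k!/3^{3k}. -/
open Nat

namespace IGP

variable {k : ℕ}

/-- The encoding graph for a permutation `π`.  Roles (first coordinate):
`0` = "u"-vertices (a clique, interval `[-1-i, k+1+π i]`),
`1` = "w"-vertices (a clique, interval `[k+1+j, 3k+1]`),
`2` = "h"-vertices (points `-w - 1/2`). -/
def IG (π : Equiv.Perm (Fin k)) : SimpleGraph (Fin 3 × Fin k) where
  Adj x y := x ≠ y ∧
    ((x.1 = 0 ∧ y.1 = 0) ∨ (x.1 = 1 ∧ y.1 = 1) ∨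
     (x.1 = 0 ∧ y.1 = 1 ∧ y.2 ≤ π x.2) ∨ (x.1 = 1 ∧ y.1 = 0 ∧ x.2 ≤ π y.2) ∨
     (x.1 = 0 ∧ y.1 = 2 ∧ y.2 ≤ x.2) ∨ (x.1 = 2 ∧ y.1 = 0 ∧ x.2 ≤ y.2))
  symm := ⟨by rintro x y ⟨h1, h2⟩; exact ⟨Ne.symm h1, by tauto⟩⟩
  loopless := ⟨by rintro x ⟨h1, _⟩; exact h1 rfl⟩

lemma IG_adj (π : Equiv.Perm (Fin k)) (x y : Fin 3 × Fin k) :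
    (IG π).Adj x y ↔ x ≠ y ∧
    ((x.1 = 0 ∧ y.1 = 0) ∨ (x.1 = 1 ∧ y.1 = 1) ∨
     (x.1 = 0 ∧ y.1 = 1 ∧ y.2 ≤ π x.2) ∨ (x.1 = 1 ∧ y.1 = 0 ∧ x.2 ≤ π y.2) ∨
     (x.1 = 0 ∧ y.1 = 2 ∧ y.2 ≤ x.2) ∨ (x.1 = 2 ∧ y.1 = 0 ∧ x.2 ≤ y.2)) := Iff.rfl

lemma nbhd_h (π : Equiv.Perm (Fin k)) (w : Fin k) :
    (IG π).neighborSet ((2 : Fin 3), w) = ↑({(0 : Fin 3)} ×ˢ Finset.Ici w) := by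
  ext ⟨r, m⟩
  simp only [SimpleGraph.mem_neighborSet, IG_adj, Finset.coe_product, Finset.coe_singleton,
    Finset.coe_Ici, Set.mem_prod, Set.mem_singleton_iff, Set.mem_Ici]
  constructor
  · rintro ⟨hne, h⟩
    rcases h with ⟨h1,h2⟩|⟨h1,h2⟩|⟨h1,h2,h3⟩|⟨h1,h2,h3⟩|⟨h1,h2,h3⟩|⟨h1,h2,h3⟩ <;>
      first | (exact absurd h1 (by decide)) | exact ⟨h2, h3⟩
  · rintro ⟨h1, h2⟩
    subst h1
    exact ⟨by simp, by tauto⟩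

lemma card_nbhd_h (π : Equiv.Perm (Fin k)) (w : Fin k) :
    Nat.card ((IG π).neighborSet ((2 : Fin 3), w)) = k - w := by
  rw [nbhd_h, Nat.card_coe_set_eq, Set.ncard_coe_finset, Finset.card_product]
  simp

lemma nbhd_u (π : Equiv.Perm (Fin k)) (i : Fin k) :
    (IG π).neighborSet ((0 : Fin 3), i) =
      ↑(({(0 : Fin 3)} ×ˢ ({i}ᶜ : Finset (Fin k))) ∪ ({(1 : Fin 3)} ×ˢ Finset.Iic (π i))
          ∪ ({(2 : Fin 3)} ×ˢ Finset.Iic i)) := by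
  ext ⟨r, m⟩
  simp only [SimpleGraph.mem_neighborSet, IG_adj, Finset.coe_union, Set.mem_union,
    Finset.coe_product, Finset.coe_singleton, Finset.coe_Iic, Finset.coe_compl,
    Set.mem_prod, Set.mem_singleton_iff, Set.mem_Iic, Set.mem_compl_iff]
  constructor
  · rintro ⟨hne, h⟩
    rcases h with ⟨h1,h2⟩|⟨h1,h2⟩|⟨h1,h2,h3⟩|⟨h1,h2,h3⟩|⟨h1,h2,h3⟩|⟨h1,h2,h3⟩ <;>
      first
        | (exact absurd h1 (by decide))
        | (left; left; exact ⟨h2, by rintro rfl; exact hne (by simp [h2])⟩)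
        | (left; right; exact ⟨h2, h3⟩)
        | (right; exact ⟨h2, h3⟩)
  · rintro ((⟨h1, h2⟩ | ⟨h1, h2⟩) | ⟨h1, h2⟩) <;> subst h1
    · exact ⟨by simp [Ne.symm h2], by tauto⟩
    · exact ⟨by simp, by tauto⟩
    · exact ⟨by simp, by tauto⟩

lemma card_nbhd_u (π : Equiv.Perm (Fin k)) (i : Fin k) :
    Nat.card ((IG π).neighborSet ((0 : Fin 3), i)) = k + 1 + π i + i := by
  rw [nbhd_u, Nat.card_coe_set_eq, Set.ncard_coe_finset]
  rw [Finset.card_union_of_disjoint, Finset.card_union_of_disjoint]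
  · simp only [Finset.card_product, Finset.card_singleton, Finset.card_compl,
      Finset.card_singleton, Fin.card_Iic, one_mul, Fintype.card_fin]
    have := i.isLt
    have := (π i).isLt
    omega
  · simp only [Finset.disjoint_left, Finset.mem_product, Finset.mem_singleton]
    rintro ⟨r, m⟩ ⟨h1, -⟩ ⟨h2, -⟩
    subst h1; simp at h2
  · simp only [Finset.disjoint_left, Finset.mem_union, Finset.mem_product, Finset.mem_singleton]
    rintro ⟨r, m⟩ (⟨h1, -⟩ | ⟨h1, -⟩) ⟨h2, -⟩ <;> (subst h1; simp at h2)

lemma card_nbhd_w_ge (π : Equiv.Perm (Fin k)) (j : Fin k) :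
    k ≤ Nat.card ((IG π).neighborSet ((1 : Fin 3), j)) := by
  classical
  have hsub : ↑((insert ((0 : Fin 3), π.symm j)
        ({(1 : Fin 3)} ×ˢ ({j}ᶜ : Finset (Fin k)))) : Finset (Fin 3 × Fin k))
      ⊆ (IG π).neighborSet ((1 : Fin 3), j) := by
    intro x hx
    simp only [Finset.coe_insert, Set.mem_insert_iff, Finset.coe_product,
      Finset.coe_singleton, Finset.coe_compl, Set.mem_prod, Set.mem_singleton_iff,
      Set.mem_compl_iff] at hx
    rcases hx with rfl | ⟨h1, h2⟩
    · refine ⟨by simp, ?_⟩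
      refine Or.inr (Or.inr (Or.inr (Or.inl ⟨rfl, rfl, ?_⟩)))
      simp
    · obtain ⟨r, m⟩ := x
      subst h1
      simp only [Finset.mem_compl, Finset.mem_singleton] at h2
      exact ⟨by simp [Ne.symm h2], by tauto⟩
  have hf : ((IG π).neighborSet ((1 : Fin 3), j)).Finite := Set.toFinite _
  calc k = ((insert ((0 : Fin 3), π.symm j)
        ({(1 : Fin 3)} ×ˢ ({j}ᶜ : Finset (Fin k)))) : Finset (Fin 3 × Fin k)).card := by
        rw [Finset.card_insert_of_notMem (by simp)]
        simp only [Finset.card_product, Finset.card_singleton, Finset.card_compl,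
          Fintype.card_fin, one_mul]
        have := j.isLt; omega
    _ ≤ Nat.card ((IG π).neighborSet ((1 : Fin 3), j)) := by
        rw [Nat.card_coe_set_eq]
        have h := Set.ncard_le_ncard hsub hf
        rwa [Set.ncard_coe_finset] at h

/-- left endpoints -/
noncomputable def A (π : Equiv.Perm (Fin k)) (x : Fin 3 × Fin k) : ℝ :=
  if x.1 = 0 then -1 - (x.2 : ℕ)
  else if x.1 = 1 then (k : ℝ) + 1 + (x.2 : ℕ)
  else -(x.2 : ℕ) - 1/2

/-- right endpoints -/
noncomputable def B (π : Equiv.Perm (Fin k)) (x : Fin 3 × Fin k) : ℝ :=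
  if x.1 = 0 then (k : ℝ) + 1 + (π x.2 : ℕ)
  else if x.1 = 1 then 3 * (k : ℝ) + 1
  else -(x.2 : ℕ) - 1/2

lemma A_le_B (π : Equiv.Perm (Fin k)) (x : Fin 3 × Fin k) : A π x ≤ B π x := by
  obtain ⟨r, m⟩ := x
  have h1 : ((m : ℕ) : ℝ) < k := by exact_mod_cast m.isLt
  have h2 : (0:ℝ) ≤ ((m : ℕ) : ℝ) := by positivity
  have h3 : (0:ℝ) ≤ ((π m : ℕ) : ℝ) := by positivity
  fin_cases r <;> simp [A, B] <;> linarith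

lemma char (π : Equiv.Perm (Fin k)) (x y : Fin 3 × Fin k) (hxy : x ≠ y) :
    (IG π).Adj x y ↔ (Set.Icc (A π x) (B π x) ∩ Set.Icc (A π y) (B π y)).Nonempty := by
  have htr : ∀ t : Fin 3, t = 0 ∨ t = 1 ∨ t = 2 := by decide
  obtain ⟨r, m⟩ := x
  obtain ⟨s, l⟩ := y
  rw [Set.Icc_inter_Icc, Set.nonempty_Icc, sup_le_iff, le_inf_iff, le_inf_iff]
  have hm : ((m : ℕ) : ℝ) < k := by exact_mod_cast m.isLt
  have hl : ((l : ℕ) : ℝ) < k := by exact_mod_cast l.isLt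
  have hm0 : (0:ℝ) ≤ ((m : ℕ) : ℝ) := by positivity
  have hl0 : (0:ℝ) ≤ ((l : ℕ) : ℝ) := by positivity
  have hpm : ((π m : ℕ) : ℝ) < k := by exact_mod_cast (π m).isLt
  have hpl : ((π l : ℕ) : ℝ) < k := by exact_mod_cast (π l).isLt
  have hpm0 : (0:ℝ) ≤ ((π m : ℕ) : ℝ) := by positivity
  have hpl0 : (0:ℝ) ≤ ((π l : ℕ) : ℝ) := by positivity
  have hk : (1:ℝ) ≤ k := by
    have : 1 ≤ k := Nat.one_le_iff_ne_zero.2 (by rintro rfl; exact m.elim0)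
    exact_mod_cast this
  rcases htr r with rfl|rfl|rfl <;> rcases htr s with rfl|rfl|rfl <;>
    simp only [IG_adj, A, B, ne_eq, Prod.mk.injEq, not_and] at hxy ⊢ <;>
    simp only [show ((0:Fin 3) = 1) ↔ False from by decide, show ((0:Fin 3) = 2) ↔ False from by decide,
      show ((1:Fin 3) = 0) ↔ False from by decide, show ((1:Fin 3) = 2) ↔ False from by decide,
      show ((2:Fin 3) = 0) ↔ False from by decide, show ((2:Fin 3) = 1) ↔ False from by decide,
      show ((2:Fin 3) = 2) ↔ True from by decide] <;>
    norm_num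
  -- case (0,0)
  · exact iff_of_true (hxy trivial) ⟨⟨by linarith, by linarith⟩, by linarith, by linarith⟩
  -- case (0,1)
  · constructor
    · intro h; exact ⟨⟨by linarith, by linarith⟩, h, by linarith⟩
    · exact fun h => h.2.1
  -- case (0,2)
  · constructor
    · intro h
      have hc : ((l:ℕ):ℝ) ≤ ((m:ℕ):ℝ) := by exact_mod_cast h
      exact ⟨⟨by linarith, by linarith⟩, by linarith⟩
    · intro h
      have h2 := h.1.2
      have hn : (l:ℕ) < (m:ℕ) + 1 := by
        exact_mod_cast (by linarith : ((l:ℕ):ℝ) < ((m:ℕ):ℝ) + 1)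
      exact Fin.le_def.2 (by omega)
  -- case (1,0)
  · constructor
    · intro h; exact ⟨⟨by linarith, h⟩, by linarith, by linarith⟩
    · exact fun h => h.1.2
  -- case (1,1)
  · exact iff_of_true (hxy trivial) ⟨by linarith, by linarith⟩
  -- case (1,2)
  · intro h1 h2; linarith
  -- case (2,0)
  · constructor
    · intro h
      have hc : ((m:ℕ):ℝ) ≤ ((l:ℕ):ℝ) := by exact_mod_cast h
      exact ⟨by linarith, by linarith, by linarith⟩
    · intro h
      have h2 := h.2.1
      have hn : (m:ℕ) < (l:ℕ) + 1 := by
        exact_mod_cast (by linarith : ((m:ℕ):ℝ) < ((l:ℕ):ℝ) + 1)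
      exact Fin.le_def.2 (by omega)
  -- case (2,1)
  · intro h1 h2; linarith
  -- case (2,2)
  · intro h1; exact lt_of_le_of_ne h1 fun e => hxy trivial e.symm

lemma adj_to_h (σ : Equiv.Perm (Fin k)) (z : Fin 3 × Fin k) (w : Fin k)
    (h : (IG σ).Adj z ((2 : Fin 3), w)) : z.1 = 0 ∧ w ≤ z.2 := by
  rw [IG_adj] at h
  obtain ⟨-, h⟩ := h
  rcases h with ⟨h1,h2⟩|⟨h1,h2⟩|⟨h1,h2,h3⟩|⟨h1,h2,h3⟩|⟨h1,h2,h3⟩|⟨h1,h2,h3⟩ <;>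
    first | exact ⟨h1, h3⟩ | simp at h2

lemma adj_u_h (π : Equiv.Perm (Fin k)) (i w : Fin k) :
    (IG π).Adj ((0 : Fin 3), i) ((2 : Fin 3), w) ↔ w ≤ i := by
  rw [IG_adj]
  constructor
  · rintro ⟨-, h⟩
    rcases h with ⟨h1,h2⟩|⟨h1,h2⟩|⟨h1,h2,h3⟩|⟨h1,h2,h3⟩|⟨h1,h2,h3⟩|⟨h1,h2,h3⟩ <;>
      first | exact h3 | simp at h2 | simp at h1
  · intro h
    refine ⟨by simp [Prod.ext_iff], ?_⟩
    exact Or.inr (Or.inr (Or.inr (Or.inr (Or.inl ⟨rfl, rfl, h⟩))))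

lemma fix_h {π σ : Equiv.Perm (Fin k)} (f : IG π ≃g IG σ) (w : Fin k) (hw : (w : ℕ) ≠ 0) :
    f ((2 : Fin 3), w) = ((2 : Fin 3), w) := by
  have htr : ∀ t : Fin 3, t = 0 ∨ t = 1 ∨ t = 2 := by decide
  have hcard : Nat.card ((IG σ).neighborSet (f ((2 : Fin 3), w))) = k - w := by
    rw [← card_nbhd_h π w]
    exact (Nat.card_congr (f.mapNeighborSet _)).symm
  have hwk : (w : ℕ) < k := w.isLt
  obtain ⟨r, m, hp⟩ : ∃ r m, f ((2 : Fin 3), w) = (r, m) := ⟨_, _, rfl⟩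
  rw [hp] at hcard
  rcases htr r with rfl|rfl|rfl
  · rw [card_nbhd_u] at hcard
    omega
  · have hge := card_nbhd_w_ge σ m
    rw [hcard] at hge
    omega
  · rw [card_nbhd_h] at hcard
    have hmk := m.isLt
    have hmw : m = w := by
      apply Fin.ext
      omega
    rwa [hmw] at hp

lemma fix_u {π σ : Equiv.Perm (Fin k)} (f : IG π ≃g IG σ) (i : Fin k) (hi : (i : ℕ) ≠ 0) :
    f ((0 : Fin 3), i) = ((0 : Fin 3), i) := by
  have hik : (i : ℕ) < k := i.isLt
  have hk2 : 2 ≤ k := by omega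
  set w₁ : Fin k := ⟨1, by omega⟩ with hw₁
  -- f (0, i) is adjacent to (2, w₁) in IG σ
  have h1 : (IG σ).Adj (f ((0 : Fin 3), i)) ((2 : Fin 3), w₁) := by
    have := f.map_adj_iff.2 ((adj_u_h π i w₁).2 (Fin.le_def.2 (by simp [hw₁]; omega)))
    rwa [fix_h f w₁ (by simp [hw₁])] at this
  obtain ⟨hrole, -⟩ := adj_to_h σ _ _ h1
  obtain ⟨r, m, hp⟩ : ∃ r m, f ((0 : Fin 3), i) = (r, m) := ⟨_, _, rfl⟩
  rw [hp] at hrole h1 ⊢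
  simp only at hrole
  subst hrole
  -- now compare adjacency to every (2, w), w ≠ 0
  have key : ∀ w : Fin k, (w : ℕ) ≠ 0 → (w ≤ m ↔ w ≤ i) := by
    intro w hw
    have := f.map_adj_iff (v := ((0 : Fin 3), i)) (w := ((2 : Fin 3), w))
    rw [fix_h f w hw, hp, adj_u_h, adj_u_h] at this
    exact this
  have hm : m = i := by
    have h2 : i ≤ m := (key i hi).2 le_rfl
    have hm0 : (m : ℕ) ≠ 0 := by
      have := Fin.le_def.1 h2
      omega
    have h3 : m ≤ i := (key m hm0).1 le_rfl
    exact le_antisymm h3 h2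
  rw [hm]

lemma perm_eq_of_iso {π σ : Equiv.Perm (Fin k)} (f : IG π ≃g IG σ) : π = σ := by
  have hagree : ∀ i : Fin k, (i : ℕ) ≠ 0 → π i = σ i := by
    intro i hi
    have hcard := Nat.card_congr (f.mapNeighborSet ((0 : Fin 3), i))
    rw [fix_u f i hi, card_nbhd_u, card_nbhd_u] at hcard
    exact Fin.ext (by omega)
  refine Equiv.ext fun i => ?_
  by_cases hi : (i : ℕ) = 0
  · by_contra hne
    set t := σ.symm (π i) with htdef
    have ht : σ t = π i := σ.apply_symm_apply _
    have htne : (t : ℕ) ≠ 0 := by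
      intro h0
      have hti : t = i := Fin.ext (by omega)
      rw [hti] at ht
      exact hne ht.symm
    have h1 : π t = π i := by rw [hagree t htne, ht]
    have h2 : t = i := π.injective h1
    rw [h2] at htne
    exact htne hi
  · exact hagree i hi

/-- transport to `Fin (3 * k)` -/
def e3 {k : ℕ} : Fin 3 × Fin k ≃ Fin (3 * k) := finProdFinEquiv

def H (π : Equiv.Perm (Fin k)) : SimpleGraph (Fin (3 * k)) :=
  (IG π).comap (e3.symm : Fin (3 * k) ≃ Fin 3 × Fin k).toEmbedding

def isoH (π : Equiv.Perm (Fin k)) : H π ≃g IG π :=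
  SimpleGraph.Iso.comap e3.symm (IG π)

lemma isInterval_H (π : Equiv.Perm (Fin k)) : IsIntervalGraph (H π) := by
  refine ⟨fun v => A π (e3.symm v), fun v => B π (e3.symm v), fun v => A_le_B π _,
    fun u v huv => ?_⟩
  exact char π _ _ (fun h => huv (e3.symm.injective h))

lemma card_perm_le (k : ℕ) : k ! ≤ intervalGraphCount (3 * k) := by
  classical
  have hGfin : Finite (SimpleGraph (Fin (3 * k))) := by
    apply Finite.of_injective (fun G : SimpleGraph (Fin (3 * k)) => G.Adj)
    intro G H h
    ext u v
    exact iff_of_eq (congrFun (congrFun h u) v)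
  set r := fun G H : {G : SimpleGraph (Fin (3 * k)) // IsIntervalGraph G} =>
    Nonempty (G.1 ≃g H.1) with hr
  have hEqv : ∀ a b, Relation.EqvGen r a b → Nonempty (a.1 ≃g b.1) := by
    intro a b h
    induction h with
    | rel x y h => exact h
    | refl x => exact ⟨RelIso.refl _⟩
    | symm x y _ ih => obtain ⟨f⟩ := ih; exact ⟨f.symm⟩
    | trans x y z _ _ ih1 ih2 => obtain ⟨f⟩ := ih1; obtain ⟨g⟩ := ih2; exact ⟨f.trans g⟩
  let F : Equiv.Perm (Fin k) → Quot r := fun π => Quot.mk r ⟨H π, isInterval_H π⟩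
  have hinj : Function.Injective F := by
    intro π σ h
    obtain ⟨f⟩ := hEqv _ _ (Quot.eq.1 h)
    exact perm_eq_of_iso ((isoH π).symm.trans (f.trans (isoH σ)))
  calc k ! = Nat.card (Equiv.Perm (Fin k)) := by
        rw [Nat.card_eq_fintype_card, Fintype.card_perm, Fintype.card_fin]
    _ ≤ Nat.card (Quot r) := Nat.card_le_card_of_injective F hinj
    _ = intervalGraphCount (3 * k) := rfl

end IGP

theorem intervalGraphCount_lower (k : ℕ) (hk : 1 ≤ k) :
    (k ! : ℝ) / 3 ^ (3 * k) ≤ intervalGraphCount (3 * k) := by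
  have h1 := IGP.card_perm_le k
  have h2 : (1 : ℝ) ≤ 3 ^ (3 * k) := one_le_pow₀ (by norm_num)
  calc (k ! : ℝ) / 3 ^ (3 * k) ≤ (k ! : ℝ) / 1 := by
        apply div_le_div_of_nonneg_left _ _ h2 <;> positivity
    _ = (k ! : ℝ) := div_one _
    _ ≤ intervalGraphCount (3 * k) := by exact_mod_cast h1
end
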